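/- Let i₂ ∈ {1,3,4,6} and j₁, j₂ ∈ {1,2,3,4} with (j₁,j₂) ∉ {(2,4),(4,2)}. Define ρ¹ = ρ₁⁷ ⊕ ρ₂^{j₁} and ρ² = (τ ∘ ρ₁^{i₂} ∘ τ) ⊕ ρ₂^{j₂} on the K3 lattice L = 3H ⊕ 2(−E8). Then ρ¹ and ρ² are commuting involutive isometries of L, and for the vectors x = w₁ + w₂ − w₃ − w₄, y = w₅ + w₆, z = w₁ + w₂ + w₃ + w₄ one has: ρ¹(x) = −x, ρ¹(y) = −y, ρ¹(z) = z, ρ²(x) = −x, ρ²(y) = y, ρ²(z) = −z; moreover in L ⊗ ℝ the triple (x, √2·y, z) is pairwise B-orthogonal with B(x,x) = B(√2·y, √2·y) = B(z,z) = 4. -/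

import Mathlib

open Matrix

/-- The Gram matrix of `3H`: block-diagonal sum of three hyperbolic planes. -/
def Gram3H : Matrix (Fin 6) (Fin 6) ℤ :=
  Matrix.of fun i j => if i.val / 2 = j.val / 2 ∧ i ≠ j then 1 else 0

/-- The Gram matrix of the lattice `−E8`. -/
def GramE8 : Matrix (Fin 8) (Fin 8) ℤ :=
  !![-2,0,1,0,0,0,0,0;
     0,-2,0,1,0,0,0,0;
     1,0,-2,1,0,0,0,0;
     0,1,1,-2,1,0,0,0;
     0,0,0,1,-2,1,0,0;
     0,0,0,0,1,-2,1,0;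
     0,0,0,0,0,1,-2,1;
     0,0,0,0,0,0,1,-2]

/-- The Gram matrix of the K3 lattice `L = 3H ⊕ 2(−E8)`. -/
def GramL : Matrix (Fin 22) (Fin 22) ℤ :=
  Matrix.of fun i j =>
    if h : i.val < 6 then
      (if h' : j.val < 6 then Gram3H ⟨i.val, h⟩ ⟨j.val, h'⟩ else 0)
    else if h2 : i.val < 14 then
      (if h' : 6 ≤ j.val ∧ j.val < 14 then
        GramE8 ⟨i.val - 6, by omega⟩ ⟨j.val - 6, by omega⟩ else 0)
    else
      (if h' : 14 ≤ j.val then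
        GramE8 ⟨i.val - 14, by have := i.isLt; omega⟩
          ⟨j.val - 14, by have := j.isLt; omega⟩ else 0)

/-- The standard basis vectors of the K3 lattice: `w (i-1) = wᵢ`. -/
def w22 (i : Fin 22) : Fin 22 → ℤ := Pi.single i 1

/-- `M` is an isometry of the lattice `(ℤⁿ, G)`. -/
def IsIsometry {n : ℕ} (G M : Matrix (Fin n) (Fin n) ℤ) : Prop :=
  IsUnit M.det ∧ Mᵀ * G * M = G

/-- The seven involutions ρ₁¹, …, ρ₁⁷ of `3H` (index `0` and `≥ 8` are dummies). -/
def rho1 : ℕ → Matrix (Fin 6) (Fin 6) ℤ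
  | 1 => !![1,0,0,0,0,0; 0,1,0,0,0,0; 0,0,-1,0,0,0; 0,0,0,-1,0,0; 0,0,0,0,-1,0; 0,0,0,0,0,-1]
  | 2 => !![1,0,0,0,0,0; 0,1,0,0,0,0; 0,0,0,-1,0,0; 0,0,-1,0,0,0; 0,0,0,0,-1,0; 0,0,0,0,0,-1]
  | 3 => !![1,0,0,0,0,0; 0,1,0,0,0,0; 0,0,0,-1,0,0; 0,0,-1,0,0,0; 0,0,0,0,0,-1; 0,0,0,0,-1,0]
  | 4 => !![0,1,0,0,0,0; 1,0,0,0,0,0; 0,0,-1,0,0,0; 0,0,0,-1,0,0; 0,0,0,0,-1,0; 0,0,0,0,0,-1]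
  | 5 => !![0,1,0,0,0,0; 1,0,0,0,0,0; 0,0,0,-1,0,0; 0,0,-1,0,0,0; 0,0,0,0,-1,0; 0,0,0,0,0,-1]
  | 6 => !![0,1,0,0,0,0; 1,0,0,0,0,0; 0,0,0,-1,0,0; 0,0,-1,0,0,0; 0,0,0,0,0,-1; 0,0,0,0,-1,0]
  | 7 => !![0,0,1,0,0,0; 0,0,0,1,0,0; 1,0,0,0,0,0; 0,1,0,0,0,0; 0,0,0,0,-1,0; 0,0,0,0,0,-1]
  | _ => 1

/-- The map `(x₁,x₂) ↦ (a·x₁, b·x₂)` on `2(−E8) = ℤ¹⁶` as a matrix. -/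
def diag2E8 (a b : ℤ) : Matrix (Fin 16) (Fin 16) ℤ :=
  Matrix.of fun i j => if i = j then (if i.val < 8 then a else b) else 0

/-- The map `(x₁,x₂) ↦ (x₂,x₁)` on `2(−E8) = ℤ¹⁶` as a matrix. -/
def swap2E8 : Matrix (Fin 16) (Fin 16) ℤ :=
  Matrix.of fun i j => if i.val + 8 = j.val ∨ j.val + 8 = i.val then 1 else 0

/-- The four involutions ρ₂¹, …, ρ₂⁴ of `2(−E8)` (index `0` and `≥ 5` are dummies). -/
def rho2 : ℕ → Matrix (Fin 16) (Fin 16) ℤ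
  | 1 => 1
  | 2 => diag2E8 (-1) 1
  | 3 => -1
  | 4 => swap2E8
  | _ => 1

/-- The isometry `τ` of `3H` with `τ(u_kˡ) = u_k^{4−l}`: it interchanges the first and
third hyperbolic planes and is the identity on the second one. -/
def tau3H : Matrix (Fin 6) (Fin 6) ℤ :=
  !![0,0,0,0,1,0; 0,0,0,0,0,1; 0,0,1,0,0,0; 0,0,0,1,0,0; 1,0,0,0,0,0; 0,1,0,0,0,0]

/-- The direct sum `A ⊕ B` of a `6×6` and a `16×16` matrix, acting on `L = 3H ⊕ 2(−E8)`. -/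
def dsum (A : Matrix (Fin 6) (Fin 6) ℤ) (B : Matrix (Fin 16) (Fin 16) ℤ) :
    Matrix (Fin 22) (Fin 22) ℤ :=
  Matrix.of fun i j =>
    if h : i.val < 6 then
      (if h' : j.val < 6 then A ⟨i.val, h⟩ ⟨j.val, h'⟩ else 0)
    else
      (if h' : j.val < 6 then 0
       else B ⟨i.val - 6, by have := i.isLt; omega⟩ ⟨j.val - 6, by have := j.isLt; omega⟩)

/-- The real Gram matrix of the K3 lattice. -/
noncomputable def GramLR : Matrix (Fin 22) (Fin 22) ℝ := GramL.map (Int.cast : ℤ → ℝ)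


/-- The Gram matrix of `2(−E8)`. -/
def G16 : Matrix (Fin 16) (Fin 16) ℤ :=
  Matrix.of fun i j =>
    if h : i.val < 8 then
      (if h' : j.val < 8 then GramE8 ⟨i.val, h⟩ ⟨j.val, h'⟩ else 0)
    else
      (if h' : 8 ≤ j.val then
        GramE8 ⟨i.val - 8, by have := i.isLt; omega⟩
          ⟨j.val - 8, by have := j.isLt; omega⟩ else 0)

set_option maxHeartbeats 1600000 in
lemma GramL_eq : GramL = dsum Gram3H G16 := by decide

lemma sum22 (f : Fin 22 → ℤ) :
    ∑ k : Fin 22, f k =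
      (∑ k : Fin 6, f ⟨k.val, by omega⟩) + ∑ k : Fin 16, f ⟨k.val + 6, by omega⟩ := by
  rw [show (∑ k : Fin 22, f k) = ∑ k : Fin (6+16), f (Fin.cast (by norm_num) k) from
    (Fin.sum_congr' f (by norm_num)).symm, Fin.sum_univ_add]
  congr 1 <;>
    exact Finset.sum_congr rfl fun k _ => congrArg f (Fin.ext (by simp [Fin.natAdd]; try omega))

lemma dsum_mul (A C : Matrix (Fin 6) (Fin 6) ℤ) (B D : Matrix (Fin 16) (Fin 16) ℤ) :
    dsum A B * dsum C D = dsum (A * C) (B * D) := by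
  ext i j
  simp only [Matrix.mul_apply, dsum, Matrix.of_apply]
  rw [sum22]
  by_cases hi : i.val < 6 <;> by_cases hj : j.val < 6 <;>
    simp [hi, hj, Matrix.mul_apply]

lemma dsum_transpose (A : Matrix (Fin 6) (Fin 6) ℤ) (B : Matrix (Fin 16) (Fin 16) ℤ) :
    (dsum A B)ᵀ = dsum Aᵀ Bᵀ := by
  ext i j
  simp only [Matrix.transpose_apply, dsum, Matrix.of_apply]
  by_cases hi : i.val < 6 <;> by_cases hj : j.val < 6 <;> simp [hi, hj]

lemma dsum_one : dsum 1 1 = (1 : Matrix (Fin 22) (Fin 22) ℤ) := by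
  ext i j
  simp only [dsum, Matrix.of_apply, Matrix.one_apply]
  by_cases hi : i.val < 6 <;> by_cases hj : j.val < 6 <;>
    simp [hi, hj, Fin.ext_iff] <;> omega

/-- Extend a vector on the `3H` part by zero. -/
def ext22 (v : Fin 6 → ℤ) : Fin 22 → ℤ := fun i => if h : i.val < 6 then v ⟨i.val, h⟩ else 0

lemma dsum_mulVec (A : Matrix (Fin 6) (Fin 6) ℤ) (B : Matrix (Fin 16) (Fin 16) ℤ)
    (v : Fin 6 → ℤ) : (dsum A B).mulVec (ext22 v) = ext22 (A.mulVec v) := by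
  ext i
  simp only [Matrix.mulVec, dotProduct, dsum, ext22, Matrix.of_apply]
  rw [sum22]
  by_cases hi : i.val < 6 <;> simp [hi, Matrix.mulVec, dotProduct]

lemma ext22_neg (v : Fin 6 → ℤ) : ext22 (-v) = -ext22 v := by
  funext i; by_cases hi : i.val < 6 <;> simp [ext22, hi]

lemma sq_isUnit_det {n : Type*} [DecidableEq n] [Fintype n] (M : Matrix n n ℤ)
    (h : M * M = 1) : IsUnit M.det :=
  IsUnit.of_mul_eq_one _ (by rw [← Matrix.det_mul, h, Matrix.det_one])

lemma iso_of_sq (M : Matrix (Fin 22) (Fin 22) ℤ) (h1 : M * M = 1)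
    (h2 : Mᵀ * GramL * M = GramL) : IsIsometry GramL M :=
  ⟨sq_isUnit_det M h1, h2⟩

lemma cast_dot (v w : Fin 22 → ℤ) :
    (fun i => (v i : ℝ)) ⬝ᵥ GramLR.mulVec (fun i => (w i : ℝ)) =
      ((v ⬝ᵥ GramL.mulVec w : ℤ) : ℝ) := by
  rw [show ((v ⬝ᵥ GramL.mulVec w : ℤ) : ℝ) = (Int.castRingHom ℝ) (v ⬝ᵥ GramL.mulVec w) from rfl,
    RingHom.map_dotProduct]
  congr 1
  funext i
  rw [show ((Int.castRingHom ℝ) ∘ (GramL.mulVec w)) i = (Int.castRingHom ℝ) (GramL.mulVec w i)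
    from rfl, RingHom.map_mulVec]
  rfl
set_option maxHeartbeats 4000000 in
theorem stmt13 (i₂ j₁ j₂ : ℕ)
    (hi₂ : i₂ ∈ ({1, 3, 4, 6} : Set ℕ))
    (hj₁ : j₁ ∈ Finset.Icc 1 4) (hj₂ : j₂ ∈ Finset.Icc 1 4)
    (hj : ¬((j₁ = 2 ∧ j₂ = 4) ∨ (j₁ = 4 ∧ j₂ = 2)))
    (σ₁ σ₂ : Matrix (Fin 22) (Fin 22) ℤ)
    (hσ₁ : σ₁ = dsum (rho1 7) (rho2 j₁))
    (hσ₂ : σ₂ = dsum (tau3H * rho1 i₂ * tau3H) (rho2 j₂))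
    (x y z : Fin 22 → ℤ)
    (hx : x = w22 0 + w22 1 - w22 2 - w22 3)
    (hy : y = w22 4 + w22 5)
    (hz : z = w22 0 + w22 1 + w22 2 + w22 3) :
    IsIsometry GramL σ₁ ∧ IsIsometry GramL σ₂ ∧
    σ₁ * σ₁ = 1 ∧ σ₂ * σ₂ = 1 ∧ σ₁ * σ₂ = σ₂ * σ₁ ∧
    σ₁.mulVec x = -x ∧ σ₁.mulVec y = -y ∧ σ₁.mulVec z = z ∧
    σ₂.mulVec x = -x ∧ σ₂.mulVec y = y ∧ σ₂.mulVec z = -z ∧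
    (let xR : Fin 22 → ℝ := fun i => (x i : ℝ)
     let yR : Fin 22 → ℝ := Real.sqrt 2 • fun i => (y i : ℝ)
     let zR : Fin 22 → ℝ := fun i => (z i : ℝ)
     xR ⬝ᵥ GramLR.mulVec xR = 4 ∧ yR ⬝ᵥ GramLR.mulVec yR = 4 ∧
     zR ⬝ᵥ GramLR.mulVec zR = 4 ∧ xR ⬝ᵥ GramLR.mulVec yR = 0 ∧
     xR ⬝ᵥ GramLR.mulVec zR = 0 ∧ yR ⬝ᵥ GramLR.mulVec zR = 0) := by
  subst hσ₁ hσ₂ hx hy hz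
  simp only [Set.mem_insert_iff, Set.mem_singleton_iff] at hi₂
  simp only [Finset.mem_Icc] at hj₁ hj₂
  obtain ⟨hj₁l, hj₁r⟩ := hj₁
  obtain ⟨hj₂l, hj₂r⟩ := hj₂
  obtain ⟨hA2, hAG, hAc, hAx, hAy, hAz⟩ :
      (tau3H * rho1 i₂ * tau3H) * (tau3H * rho1 i₂ * tau3H) = 1 ∧
      (tau3H * rho1 i₂ * tau3H)ᵀ * Gram3H * (tau3H * rho1 i₂ * tau3H) = Gram3H ∧
      rho1 7 * (tau3H * rho1 i₂ * tau3H) = (tau3H * rho1 i₂ * tau3H) * rho1 7 ∧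
      (tau3H * rho1 i₂ * tau3H).mulVec ![1,1,-1,-1,0,0] = -![1,1,-1,-1,0,0] ∧
      (tau3H * rho1 i₂ * tau3H).mulVec ![0,0,0,0,1,1] = ![0,0,0,0,1,1] ∧
      (tau3H * rho1 i₂ * tau3H).mulVec ![1,1,1,1,0,0] = -![1,1,1,1,0,0] := by
    rcases hi₂ with h|h|h|h <;> subst h <;>
      exact ⟨by decide, by decide, by decide, by decide, by decide, by decide⟩
  obtain ⟨hB1, hB1G⟩ : rho2 j₁ * rho2 j₁ = 1 ∧ (rho2 j₁)ᵀ * G16 * rho2 j₁ = G16 := by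
    interval_cases j₁ <;> exact ⟨by decide, by decide⟩
  obtain ⟨hB2, hB2G⟩ : rho2 j₂ * rho2 j₂ = 1 ∧ (rho2 j₂)ᵀ * G16 * rho2 j₂ = G16 := by
    interval_cases j₂ <;> exact ⟨by decide, by decide⟩
  have hBc : rho2 j₁ * rho2 j₂ = rho2 j₂ * rho2 j₁ := by
    interval_cases j₁ <;> interval_cases j₂ <;> first | omega | decide
  have hR7 : rho1 7 * rho1 7 = 1 := by decide
  have hR7G : (rho1 7)ᵀ * Gram3H * rho1 7 = Gram3H := by decide
  have hx' : w22 0 + w22 1 - w22 2 - w22 3 = ext22 ![1,1,-1,-1,0,0] := by decide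
  have hy' : w22 4 + w22 5 = ext22 ![0,0,0,0,1,1] := by decide
  have hz' : w22 0 + w22 1 + w22 2 + w22 3 = ext22 ![1,1,1,1,0,0] := by decide
  have s1 : dsum (rho1 7) (rho2 j₁) * dsum (rho1 7) (rho2 j₁) = 1 := by
    rw [dsum_mul, hR7, hB1, dsum_one]
  have s2 : dsum (tau3H * rho1 i₂ * tau3H) (rho2 j₂) *
      dsum (tau3H * rho1 i₂ * tau3H) (rho2 j₂) = 1 := by
    rw [dsum_mul, hA2, hB2, dsum_one]
  have h2s : Real.sqrt 2 * Real.sqrt 2 = 2 := Real.mul_self_sqrt (by norm_num)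
  refine ⟨iso_of_sq _ s1 ?_, iso_of_sq _ s2 ?_, s1, s2, ?_, ?_, ?_, ?_, ?_, ?_, ?_, ?_⟩
  · rw [GramL_eq, dsum_transpose, dsum_mul, dsum_mul, hR7G, hB1G]
  · rw [GramL_eq, dsum_transpose, dsum_mul, dsum_mul, hAG, hB2G]
  · rw [dsum_mul, dsum_mul, hAc, hBc]
  · rw [hx', dsum_mulVec,
      show (rho1 7).mulVec ![1,1,-1,-1,0,0] = -![1,1,-1,-1,0,0] from by decide, ext22_neg]
  · rw [hy', dsum_mulVec,
      show (rho1 7).mulVec ![0,0,0,0,1,1] = -![0,0,0,0,1,1] from by decide, ext22_neg]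
  · rw [hz', dsum_mulVec,
      show (rho1 7).mulVec ![1,1,1,1,0,0] = ![1,1,1,1,0,0] from by decide]
  · rw [hx', dsum_mulVec, hAx, ext22_neg]
  · rw [hy', dsum_mulVec, hAy]
  · rw [hz', dsum_mulVec, hAz, ext22_neg]
  · refine ⟨?_, ?_, ?_, ?_, ?_, ?_⟩
    · rw [cast_dot, show (w22 0 + w22 1 - w22 2 - w22 3) ⬝ᵥ
        GramL.mulVec (w22 0 + w22 1 - w22 2 - w22 3) = 4 from by decide]
      norm_num
    · rw [Matrix.mulVec_smul, dotProduct_smul, smul_dotProduct, cast_dot,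
        show (w22 4 + w22 5) ⬝ᵥ GramL.mulVec (w22 4 + w22 5) = 2 from by decide]
      push_cast
      rw [smul_eq_mul, smul_eq_mul, ← mul_assoc, h2s]
      norm_num
    · rw [cast_dot, show (w22 0 + w22 1 + w22 2 + w22 3) ⬝ᵥ
        GramL.mulVec (w22 0 + w22 1 + w22 2 + w22 3) = 4 from by decide]
      norm_num
    · rw [Matrix.mulVec_smul, dotProduct_smul, cast_dot,
        show (w22 0 + w22 1 - w22 2 - w22 3) ⬝ᵥ GramL.mulVec (w22 4 + w22 5) = 0 from by decide]
      simp
    · rw [cast_dot, show (w22 0 + w22 1 - w22 2 - w22 3) ⬝ᵥ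
        GramL.mulVec (w22 0 + w22 1 + w22 2 + w22 3) = 0 from by decide]
      norm_num
    · rw [smul_dotProduct, cast_dot,
        show (w22 4 + w22 5) ⬝ᵥ GramL.mulVec (w22 0 + w22 1 + w22 2 + w22 3) = 0 from by decide]
      simp
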